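/- Optimality of tail truncation in d=1: under the setting of the 1-dimensional conditional variance decomposition, let V = (2/n)Σ_i w_i x_i Z_i and B = V/√Var(V). For the rejection threshold α let φ_T^α be the acceptance event {B² < a} with P(B² < a) = 1 − α. Then for any symmetric acceptance rule ρ with P(ρ=1 | x) ≥ 1 − α, Var(τ̂ | x, φ_T^α = 1) ≤ Var(τ̂ | x, ρ = 1). -/

import Mathlib

open MeasureTheory ProbabilityTheory

lemma pi_integrable_prod {A : Type*} [MeasurableSpace A] (μ : Measure A) [IsProbabilityMeasure μ]
    {n : ℕ} {f : Fin n → A → ℝ} (hf : ∀ i, Integrable (f i) μ) :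
    Integrable (fun e : Fin n → A => ∏ i, f i (e i)) (Measure.pi fun _ => μ) := by
  letI : MeasureSpace A := ⟨μ⟩
  haveI : SigmaFinite (volume : Measure A) := by
    show SigmaFinite μ; infer_instance
  exact Integrable.fintype_prod hf

lemma pi_integral_prod {A : Type*} [MeasurableSpace A] (μ : Measure A) [IsProbabilityMeasure μ]
    {n : ℕ} (f : Fin n → A → ℝ) :
    ∫ e : Fin n → A, ∏ i, f i (e i) ∂(Measure.pi fun _ => μ) = ∏ i, ∫ p, f i p ∂μ := by
  letI : MeasureSpace A := ⟨μ⟩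
  haveI : SigmaFinite (volume : Measure A) := by
    show SigmaFinite μ; infer_instance
  exact integral_fintype_prod_eq_prod f

section single
variable {A : Type*} [MeasurableSpace A] (μ : Measure A) [IsProbabilityMeasure μ] {n : ℕ}

lemma pi_single (g : A → ℝ) (hg : Integrable g μ) (i : Fin n) :
    Integrable (fun e : Fin n → A => g (e i)) (Measure.pi fun _ => μ) ∧
      ∫ e : Fin n → A, g (e i) ∂(Measure.pi fun _ => μ) = ∫ p, g p ∂μ := by
  classical
  set f : Fin n → A → ℝ := fun k p => if k = i then g p else 1 with hf
  have hfi : ∀ k, Integrable (f k) μ := by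
    intro k; by_cases h : k = i <;> simp [hf, h, hg, integrable_const]
  have hprod : ∀ e : Fin n → A, (∏ k, f k (e k)) = g (e i) := by
    intro e
    rw [show (∏ k, f k (e k)) = ∏ k, if k = i then g (e k) else 1 from rfl]
    simp
  have h1 := pi_integrable_prod μ hfi
  have h2 := pi_integral_prod μ f
  simp only [hprod] at h1 h2
  refine ⟨h1, ?_⟩
  rw [h2]
  have : ∀ k, (∫ p, f k p ∂μ) = if k = i then ∫ p, g p ∂μ else 1 := by
    intro k; by_cases h : k = i <;> simp [hf, h]
  simp [this]

lemma pi_double (g h : A → ℝ) (hg : Integrable g μ) (hh : Integrable h μ)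
    (i j : Fin n) (hij : i ≠ j) :
    Integrable (fun e : Fin n → A => g (e i) * h (e j)) (Measure.pi fun _ => μ) ∧
      ∫ e : Fin n → A, g (e i) * h (e j) ∂(Measure.pi fun _ => μ)
        = (∫ p, g p ∂μ) * ∫ p, h p ∂μ := by
  classical
  set f : Fin n → A → ℝ := fun k p => if k = i then g p else if k = j then h p else 1 with hf
  have hfi : ∀ k, Integrable (f k) μ := by
    intro k
    by_cases h1 : k = i
    · simpa [hf, h1] using hg
    by_cases h2 : k = j <;> simp [hf, h1, h2, hh, integrable_const, Ne.symm hij]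
  have hprod : ∀ e : Fin n → A, (∏ k, f k (e k)) = g (e i) * h (e j) := by
    intro e
    rw [show (∏ k, f k (e k)) = ∏ k, if k = i then g (e k) else if k = j then h (e k) else 1
      from rfl]
    rw [← Finset.mul_prod_erase Finset.univ _ (Finset.mem_univ i)]
    have hji : j ∈ Finset.univ.erase i := Finset.mem_erase.2 ⟨hij.symm, Finset.mem_univ j⟩
    rw [← Finset.mul_prod_erase _ _ hji]
    have hrest : ∏ k ∈ (Finset.univ.erase i).erase j,
        (if k = i then g (e k) else if k = j then h (e k) else 1) = 1 := by
      apply Finset.prod_eq_one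
      intro k hk
      have h1 : k ≠ j := (Finset.mem_erase.1 hk).1
      have h2 : k ≠ i := (Finset.mem_erase.1 (Finset.mem_erase.1 hk).2).1
      simp [h1, h2]
    rw [hrest]
    simp [hij.symm, Ne.symm hij, hij]
  have h1 := pi_integrable_prod μ hfi
  have h2 := pi_integral_prod μ f
  simp only [hprod] at h1 h2
  refine ⟨h1, ?_⟩
  rw [h2]
  have heval : ∀ k, (∫ p, f k p ∂μ)
      = if k = i then ∫ p, g p ∂μ else if k = j then ∫ p, h p ∂μ else 1 := by
    intro k
    by_cases h1 : k = i
    · simp [hf, h1]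
    by_cases h2 : k = j <;> simp [hf, h1, h2, Ne.symm hij]
  rw [Finset.prod_congr rfl fun k _ => heval k]
  rw [← Finset.mul_prod_erase Finset.univ _ (Finset.mem_univ i)]
  have hji : j ∈ Finset.univ.erase i := Finset.mem_erase.2 ⟨hij.symm, Finset.mem_univ j⟩
  rw [← Finset.mul_prod_erase _ _ hji]
  have hrest : ∏ k ∈ (Finset.univ.erase i).erase j,
      (if k = i then ∫ p, g p ∂μ else if k = j then ∫ p, h p ∂μ else 1) = 1 := by
    apply Finset.prod_eq_one
    intro k hk
    have h1 : k ≠ j := (Finset.mem_erase.1 hk).1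
    have h2 : k ≠ i := (Finset.mem_erase.1 (Finset.mem_erase.1 hk).2).1
    simp [h1, h2]
  rw [hrest]
  simp [Ne.symm hij]

end single

lemma key_noise (n : ℕ) (μ0 : Measure (ℝ × ℝ)) [IsProbabilityMeasure μ0]
    (hi1 : Integrable (fun p : ℝ × ℝ => p.1) μ0)
    (hi2 : Integrable (fun p : ℝ × ℝ => p.2) μ0)
    (hi3 : Integrable (fun p : ℝ × ℝ => p.1 ^ 2) μ0)
    (hi4 : Integrable (fun p : ℝ × ℝ => p.2 ^ 2) μ0)
    (hmean0 : (∫ p, (p : ℝ × ℝ).1 ∂μ0) = 0) (hmean1 : (∫ p, (p : ℝ × ℝ).2 ∂μ0) = 0)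
    (σ : ℝ)
    (hvar0 : (∫ p, (p : ℝ × ℝ).1 ^ 2 ∂μ0) = σ ^ 2)
    (hvar1 : (∫ p, (p : ℝ × ℝ).2 ^ 2 ∂μ0) = σ ^ 2)
    (w : Fin n → ℝ) (c r : ℝ) (z : Fin n → Bool) :
    Integrable (fun e : Fin n → ℝ × ℝ =>
        r + c * ∑ i, w i * (if z i then (e i).2 else -(e i).1)) (Measure.pi fun _ => μ0) ∧
    Integrable (fun e : Fin n → ℝ × ℝ =>
        (r + c * ∑ i, w i * (if z i then (e i).2 else -(e i).1)) ^ 2) (Measure.pi fun _ => μ0) ∧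
    (∫ e : Fin n → ℝ × ℝ,
        (r + c * ∑ i, w i * (if z i then (e i).2 else -(e i).1)) ∂(Measure.pi fun _ => μ0)) = r ∧
    (∫ e : Fin n → ℝ × ℝ,
        (r + c * ∑ i, w i * (if z i then (e i).2 else -(e i).1)) ^ 2 ∂(Measure.pi fun _ => μ0))
      = r ^ 2 + c ^ 2 * σ ^ 2 * ∑ i, (w i) ^ 2 := by
  classical
  set μE : Measure (Fin n → ℝ × ℝ) := Measure.pi fun _ => μ0 with hμE
  set ξ : Bool → ℝ × ℝ → ℝ := fun b p => if b then p.2 else -p.1 with hξ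
  have hξf : ξ false = fun p => -p.1 := by funext p; simp [hξ]
  have hξt : ξ true = fun p => p.2 := by funext p; simp [hξ]
  have hξint : ∀ b, Integrable (ξ b) μ0 := by
    intro b; cases b
    · rw [hξf]; exact hi1.neg
    · rw [hξt]; exact hi2
  have hξsqint : ∀ b, Integrable (fun p => ξ b p ^ 2) μ0 := by
    intro b; cases b
    · rw [hξf]; simpa using hi3
    · rw [hξt]; exact hi4
  have hξmean : ∀ b, (∫ p, ξ b p ∂μ0) = 0 := by
    intro b; cases b
    · rw [hξf]; rw [integral_neg]; simp [hmean0]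
    · rw [hξt]; exact hmean1
  have hξvar : ∀ b, (∫ p, ξ b p ^ 2 ∂μ0) = σ ^ 2 := by
    intro b; cases b
    · rw [hξf]; simpa using hvar0
    · rw [hξt]; exact hvar1
  -- rewrite integrand using ξ
  have hrw : ∀ e : Fin n → ℝ × ℝ,
      (r + c * ∑ i, w i * (if z i then (e i).2 else -(e i).1))
        = r + ∑ i, c * w i * ξ (z i) (e i) := by
    intro e
    rw [Finset.mul_sum]
    congr 1
    refine Finset.sum_congr rfl fun i _ => ?_
    simp [hξ]; ring
  -- linear part
  have hlin_int : ∀ i : Fin n, Integrable (fun e : Fin n → ℝ × ℝ => c * w i * ξ (z i) (e i)) μE :=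
    fun i => ((pi_single μ0 (ξ (z i)) (hξint (z i)) i).1).const_mul _
  have hlin_val : ∀ i : Fin n,
      (∫ e, c * w i * ξ (z i) (e i) ∂μE) = 0 := by
    intro i
    rw [integral_const_mul, (pi_single μ0 (ξ (z i)) (hξint (z i)) i).2, hξmean, mul_zero]
  have hN_int : Integrable (fun e : Fin n → ℝ × ℝ => ∑ i, c * w i * ξ (z i) (e i)) μE :=
    integrable_finset_sum _ fun i _ => hlin_int i
  have hN_val : (∫ e, ∑ i, c * w i * ξ (z i) (e i) ∂μE) = 0 := by
    rw [integral_finset_sum _ fun i _ => hlin_int i]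
    simp [hlin_val]
  -- quadratic cross terms
  have hcross_int : ∀ i j : Fin n,
      Integrable (fun e : Fin n → ℝ × ℝ =>
        (c * w i * ξ (z i) (e i)) * (c * w j * ξ (z j) (e j))) μE := by
    intro i j
    by_cases hij : i = j
    · subst hij
      have := ((pi_single μ0 (fun p => ξ (z i) p ^ 2) (hξsqint (z i)) i).1).const_mul
        ((c * w i) * (c * w i))
      refine this.congr (Filter.Eventually.of_forall fun e => ?_)
      simp; ring
    · have := ((pi_double μ0 (ξ (z i)) (ξ (z j)) (hξint (z i)) (hξint (z j)) i j hij).1).const_mul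
        ((c * w i) * (c * w j))
      refine this.congr (Filter.Eventually.of_forall fun e => ?_)
      simp; ring
  have hcross_val : ∀ i j : Fin n,
      (∫ e, (c * w i * ξ (z i) (e i)) * (c * w j * ξ (z j) (e j)) ∂μE)
        = if i = j then c ^ 2 * σ ^ 2 * w i ^ 2 else 0 := by
    intro i j
    by_cases hij : i = j
    · subst hij
      have heq : ∀ e : Fin n → ℝ × ℝ,
          (c * w i * ξ (z i) (e i)) * (c * w i * ξ (z i) (e i))
            = ((c * w i) * (c * w i)) * (ξ (z i) (e i) ^ 2) := fun e => by ring
      rw [show (fun e : Fin n → ℝ × ℝ => (c * w i * ξ (z i) (e i)) * (c * w i * ξ (z i) (e i)))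
          = fun e => ((c * w i) * (c * w i)) * (ξ (z i) (e i) ^ 2) from funext heq]
      rw [integral_const_mul, (pi_single μ0 (fun p => ξ (z i) p ^ 2) (hξsqint (z i)) i).2,
        hξvar]
      simp; ring
    · have heq : ∀ e : Fin n → ℝ × ℝ,
          (c * w i * ξ (z i) (e i)) * (c * w j * ξ (z j) (e j))
            = ((c * w i) * (c * w j)) * (ξ (z i) (e i) * ξ (z j) (e j)) := fun e => by ring
      rw [show (fun e : Fin n → ℝ × ℝ => (c * w i * ξ (z i) (e i)) * (c * w j * ξ (z j) (e j)))
          = fun e => ((c * w i) * (c * w j)) * (ξ (z i) (e i) * ξ (z j) (e j)) from funext heq]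
      rw [integral_const_mul,
        (pi_double μ0 (ξ (z i)) (ξ (z j)) (hξint (z i)) (hξint (z j)) i j hij).2,
        hξmean, hξmean]
      simp [hij]
  -- expand the square
  have hsq : ∀ e : Fin n → ℝ × ℝ,
      (r + ∑ i, c * w i * ξ (z i) (e i)) ^ 2
        = (r ^ 2 + 2 * r * ∑ i, c * w i * ξ (z i) (e i))
          + ∑ i, ∑ j, (c * w i * ξ (z i) (e i)) * (c * w j * ξ (z j) (e j)) := by
    intro e
    rw [add_sq, sq (∑ i, c * w i * ξ (z i) (e i)), Finset.sum_mul_sum]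
  have hA : Integrable (fun e : Fin n → ℝ × ℝ =>
      r ^ 2 + 2 * r * ∑ i, c * w i * ξ (z i) (e i)) μE :=
    (integrable_const (r ^ 2)).add (hN_int.const_mul (2 * r))
  have hD : Integrable (fun e : Fin n → ℝ × ℝ =>
      ∑ i, ∑ j, (c * w i * ξ (z i) (e i)) * (c * w j * ξ (z j) (e j))) μE :=
    integrable_finset_sum _ fun i _ => integrable_finset_sum _ fun j _ => hcross_int i j
  constructor
  · rw [show (fun e : Fin n → ℝ × ℝ =>
        r + c * ∑ i, w i * (if z i then (e i).2 else -(e i).1))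
        = fun e => r + ∑ i, c * w i * ξ (z i) (e i) from funext hrw]
    exact (integrable_const r).add hN_int
  constructor
  · rw [show (fun e : Fin n → ℝ × ℝ =>
        (r + c * ∑ i, w i * (if z i then (e i).2 else -(e i).1)) ^ 2)
        = fun e => (r ^ 2 + 2 * r * ∑ i, c * w i * ξ (z i) (e i))
          + ∑ i, ∑ j, (c * w i * ξ (z i) (e i)) * (c * w j * ξ (z j) (e j))
        from funext fun e => by rw [hrw e, hsq e]]
    exact hA.add hD
  constructor
  · rw [show (fun e : Fin n → ℝ × ℝ =>
        r + c * ∑ i, w i * (if z i then (e i).2 else -(e i).1))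
        = fun e => r + ∑ i, c * w i * ξ (z i) (e i) from funext hrw]
    rw [integral_add (integrable_const r) hN_int, hN_val, integral_const]
    simp
  · rw [show (fun e : Fin n → ℝ × ℝ =>
        (r + c * ∑ i, w i * (if z i then (e i).2 else -(e i).1)) ^ 2)
        = fun e => (r ^ 2 + 2 * r * ∑ i, c * w i * ξ (z i) (e i))
          + ∑ i, ∑ j, (c * w i * ξ (z i) (e i)) * (c * w j * ξ (z j) (e j))
        from funext fun e => by rw [hrw e, hsq e]]
    rw [integral_add hA hD,
      integral_add (integrable_const (r ^ 2)) (hN_int.const_mul (2 * r)),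
      integral_const, integral_const_mul, hN_val,
      integral_finset_sum _ fun i _ =>
        integrable_finset_sum _ fun j _ => hcross_int i j]
    have h2 : ∀ i : Fin n,
        (∫ e, ∑ j, (c * w i * ξ (z i) (e i)) * (c * w j * ξ (z j) (e j)) ∂μE)
          = c ^ 2 * σ ^ 2 * w i ^ 2 := by
      intro i
      rw [integral_finset_sum _ fun j _ => hcross_int i j]
      rw [Finset.sum_congr rfl fun j _ => hcross_val i j]
      simp
    rw [Finset.sum_congr rfl fun i _ => h2 i]
    simp [Finset.mul_sum]

lemma trunc_opt {α : Type*} [DecidableEq α] (A T : Finset α) (f : α → ℝ)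
    (hfnn : ∀ z, 0 ≤ f z) (t : ℝ)
    (hA : ∀ z ∈ A, f z < t) (hT : ∀ z ∈ T, z ∉ A → t ≤ f z)
    (hAne : A.Nonempty) (hTne : T.Nonempty) (hcard : A.card ≤ T.card) :
    (∑ z ∈ A, f z) / A.card ≤ (∑ z ∈ T, f z) / T.card := by
  obtain ⟨z0, hz0⟩ := hAne
  have ht : 0 < t := lt_of_le_of_lt (hfnn z0) (hA z0 hz0)
  have hAc : (0 : ℝ) < A.card := by
    exact_mod_cast Finset.card_pos.2 ⟨z0, hz0⟩
  have hTc : (0 : ℝ) < T.card := by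
    exact_mod_cast Finset.card_pos.2 hTne
  rw [div_le_div_iff₀ hAc hTc]
  -- split sums
  have hsumA : (∑ z ∈ A, f z) = (∑ z ∈ A ∩ T, f z) + ∑ z ∈ A \ T, f z :=
    (Finset.sum_inter_add_sum_sdiff A T f).symm
  have hsumT : (∑ z ∈ T, f z) = (∑ z ∈ T ∩ A, f z) + ∑ z ∈ T \ A, f z :=
    (Finset.sum_inter_add_sum_sdiff T A f).symm
  have hcardA : (A.card : ℝ) = (A ∩ T).card + (A \ T).card := by
    rw [← Finset.card_inter_add_card_sdiff A T]; push_cast; ring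
  have hcardT : (T.card : ℝ) = (A ∩ T).card + (T \ A).card := by
    rw [← Finset.card_inter_add_card_sdiff T A, Finset.inter_comm T A]; push_cast; ring
  rw [Finset.inter_comm T A] at hsumT
  set m := ((A ∩ T).card : ℝ)
  set p := ((A \ T).card : ℝ)
  set q := ((T \ A).card : ℝ)
  set A0 := ∑ z ∈ A ∩ T, f z
  set P := ∑ z ∈ A \ T, f z
  set Q := ∑ z ∈ T \ A, f z
  have hm : 0 ≤ m := by positivity
  have hA0nn : 0 ≤ A0 := Finset.sum_nonneg fun z _ => hfnn z
  have hPnn : 0 ≤ P := Finset.sum_nonneg fun z _ => hfnn z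
  have hA0le : A0 ≤ m * t := by
    have := Finset.sum_le_card_nsmul (A ∩ T) f t
      (fun z hz => (hA z (Finset.mem_inter.1 hz).1).le)
    simpa [mul_comm, nsmul_eq_mul] using this
  have hPle : P ≤ p * t := by
    have := Finset.sum_le_card_nsmul (A \ T) f t
      (fun z hz => (hA z (Finset.mem_sdiff.1 hz).1).le)
    simpa [mul_comm, nsmul_eq_mul] using this
  have hQge : q * t ≤ Q := by
    have := Finset.card_nsmul_le_sum (T \ A) f t
      (fun z hz => hT z (Finset.mem_sdiff.1 hz).1 (Finset.mem_sdiff.1 hz).2)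
    simpa [mul_comm, nsmul_eq_mul] using this
  have hpq : p ≤ q := by
    have : m + p ≤ m + q := by
      rw [← hcardA, ← hcardT]; exact_mod_cast hcard
    linarith
  have hp : (0:ℝ) ≤ p := Nat.cast_nonneg _
  have hq : (0:ℝ) ≤ q := Nat.cast_nonneg _
  rw [hsumA, hsumT, hcardA, hcardT]
  nlinarith [mul_nonneg (sub_nonneg.2 hpq) (sub_nonneg.2 hA0le),
    mul_nonneg (by linarith : (0:ℝ) ≤ m + q) (sub_nonneg.2 hPle),
    mul_nonneg (by linarith : (0:ℝ) ≤ m + p) (sub_nonneg.2 hQge)]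

lemma varc_formula (n : ℕ) (μ0 : Measure (ℝ × ℝ)) [IsProbabilityMeasure μ0]
    (hi1 : Integrable (fun p : ℝ × ℝ => p.1) μ0)
    (hi2 : Integrable (fun p : ℝ × ℝ => p.2) μ0)
    (hi3 : Integrable (fun p : ℝ × ℝ => p.1 ^ 2) μ0)
    (hi4 : Integrable (fun p : ℝ × ℝ => p.2 ^ 2) μ0)
    (hmean0 : (∫ p, (p : ℝ × ℝ).1 ∂μ0) = 0) (hmean1 : (∫ p, (p : ℝ × ℝ).2 ∂μ0) = 0)
    (σ : ℝ)
    (hvar0 : (∫ p, (p : ℝ × ℝ).1 ^ 2 ∂μ0) = σ ^ 2)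
    (hvar1 : (∫ p, (p : ℝ × ℝ).2 ^ 2 ∂μ0) = σ ^ 2)
    (w : Fin n → ℝ) (c K bb : ℝ) (Vv : (Fin n → Bool) → ℝ)
    (τ : (Fin n → ℝ × ℝ) → (Fin n → Bool) → ℝ)
    (hτ' : ∀ e z, τ e z
      = (bb * Vv z + K) + c * ∑ i, w i * (if z i then (e i).2 else -(e i).1))
    (T : Finset (Fin n → Bool)) (hne : T.Nonempty)
    (hsum0 : (∑ z ∈ T, Vv z) = 0) :
    (∫ e, (∑ z ∈ T,
        (τ e z - ∫ e', (∑ z' ∈ T, τ e' z') / T.card ∂(Measure.pi fun _ : Fin n => μ0)) ^ 2)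
          / T.card ∂(Measure.pi fun _ : Fin n => μ0))
      = bb ^ 2 * ((∑ z ∈ T, (Vv z) ^ 2) / T.card) + c ^ 2 * σ ^ 2 * ∑ i, (w i) ^ 2 := by
  classical
  set μE : Measure (Fin n → ℝ × ℝ) := Measure.pi fun _ => μ0 with hμE
  have hcard : (0:ℝ) < T.card := by exact_mod_cast Finset.card_pos.2 hne
  have hc0 : (T.card : ℝ) ≠ 0 := ne_of_gt hcard
  have hkey := fun z => key_noise n μ0 hi1 hi2 hi3 hi4 hmean0 hmean1 σ hvar0 hvar1
    w c (bb * Vv z + K) z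
  have hkey2 := fun z => key_noise n μ0 hi1 hi2 hi3 hi4 hmean0 hmean1 σ hvar0 hvar1
    w c (bb * Vv z) z
  have hτint : ∀ z, Integrable (fun e => τ e z) μE := by
    intro z; simp only [hτ']; exact (hkey z).1
  have hm : (∫ e', (∑ z' ∈ T, τ e' z') / (T.card : ℝ) ∂μE) = K := by
    rw [integral_div, integral_finset_sum _ fun z _ => hτint z]
    have hv : ∀ z ∈ T, (∫ e, τ e z ∂μE) = bb * Vv z + K := by
      intro z _; simp only [hτ']; exact (hkey z).2.2.1
    rw [Finset.sum_congr rfl hv, Finset.sum_add_distrib, ← Finset.mul_sum, hsum0,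
      Finset.sum_const, nsmul_eq_mul]
    field_simp
    ring
  have heq : ∀ z, (fun e : Fin n → ℝ × ℝ => (τ e z - K) ^ 2)
      = fun e => (bb * Vv z + c * ∑ i, w i * (if z i then (e i).2 else -(e i).1)) ^ 2 := by
    intro z; funext e; rw [hτ' e z]; ring
  have hsqint : ∀ z, Integrable (fun e => (τ e z - K) ^ 2) μE := by
    intro z; rw [heq z]; exact (hkey2 z).2.1
  simp only [hm]
  rw [integral_div, integral_finset_sum _ fun z _ => hsqint z]
  have hval : ∀ z ∈ T, (∫ e, (τ e z - K) ^ 2 ∂μE)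
      = bb ^ 2 * Vv z ^ 2 + c ^ 2 * σ ^ 2 * ∑ i, (w i) ^ 2 := by
    intro z _
    rw [heq z, (hkey2 z).2.2.2]
    ring
  rw [Finset.sum_congr rfl hval, Finset.sum_add_distrib, ← Finset.mul_sum,
    Finset.sum_const, nsmul_eq_mul]
  rw [add_div, mul_div_cancel_left₀ _ hc0]
  ring

/-- Optimality of tail truncation in `d = 1`. With
`V = (2/n) Σᵢ wᵢxᵢZᵢ`, `B = V/√Var(V)`, and the Target Balance acceptance event
`{B² < a}` of probability exactly `1 - α` (under the uniform distribution on
balanced sign vectors), for any symmetric acceptance rule `ρ` with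
`P(ρ=1) ≥ 1 - α`, `Var(τ̂ | x, B² < a) ≤ Var(τ̂ | x, ρ = 1)`. -/
theorem stmt_17 (n : ℕ) (hn : 0 < n) (heven : Even n)
    (x w : Fin n → ℝ) (β1 β0 σ : ℝ) (α a : ℝ) (hα : α ∈ Set.Ioo (0 : ℝ) 1)
    -- per-unit noise distribution for (ε₀, ε₁): mean zero, variance σ², independent
    (μ0 : Measure (ℝ × ℝ)) [IsProbabilityMeasure μ0]
    (hi1 : Integrable (fun p : ℝ × ℝ => p.1) μ0)
    (hi2 : Integrable (fun p : ℝ × ℝ => p.2) μ0)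
    (hi3 : Integrable (fun p : ℝ × ℝ => p.1 ^ 2) μ0)
    (hi4 : Integrable (fun p : ℝ × ℝ => p.2 ^ 2) μ0)
    (hmean0 : (∫ p, (p : ℝ × ℝ).1 ∂μ0) = 0) (hmean1 : (∫ p, (p : ℝ × ℝ).2 ∂μ0) = 0)
    (hvar0 : (∫ p, (p : ℝ × ℝ).1 ^ 2 ∂μ0) = σ ^ 2)
    (hvar1 : (∫ p, (p : ℝ × ℝ).2 ^ 2 ∂μ0) = σ ^ 2)
    (hindep : IndepFun (fun p : ℝ × ℝ => p.1) (fun p : ℝ × ℝ => p.2) μ0)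
    (μE : Measure (Fin n → ℝ × ℝ)) (hμE : μE = Measure.pi fun _ : Fin n => μ0)
    -- balanced sign vectors and signs
    (S : Finset (Fin n → Bool))
    (hS : S = Finset.univ.filter fun z : Fin n → Bool =>
      (Finset.univ.filter fun i => z i).card = n / 2)
    (sgn : (Fin n → Bool) → Fin n → ℝ)
    (hsgn : ∀ z i, sgn z i = if z i then 1 else -1)
    -- V, its variance under uniform balanced assignment, and the standardized B
    (V : (Fin n → Bool) → ℝ)
    (hV : ∀ z, V z = (2 / (n : ℝ)) * ∑ i, w i * x i * sgn z i)
    (VarV : ℝ)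
    (hVarV : VarV = (∑ z ∈ S, (V z - (∑ z' ∈ S, V z') / S.card) ^ 2) / S.card)
    (hVarVpos : 0 < VarV)
    (B : (Fin n → Bool) → ℝ) (hB : ∀ z, B z = V z / Real.sqrt VarV)
    -- Target Balance acceptance: B² < a, of probability exactly 1 - α
    (Ta : Finset (Fin n → Bool))
    (hTa : ∀ z, z ∈ Ta ↔ z ∈ S ∧ (B z) ^ 2 < a)
    (hTafrac : (Ta.card : ℝ) / S.card = 1 - α)
    (hTane : Ta.Nonempty)
    -- competing symmetric acceptance rule of probability at least 1 - α
    (ρ : (Fin n → Bool) → Bool)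
    (hsym : ∀ z, ρ z = ρ (fun i => !(z i)))
    (Tρ : Finset (Fin n → Bool))
    (hTρ : Tρ = S.filter fun z => ρ z = true)
    (hTρfrac : (1 : ℝ) - α ≤ (Tρ.card : ℝ) / S.card)
    (hTρne : Tρ.Nonempty)
    -- the importance-weighted estimator with linear outcomes and noise
    (τ : (Fin n → ℝ × ℝ) → (Fin n → Bool) → ℝ)
    (hτ : ∀ e z, τ e z = (2 / (n : ℝ)) *
      ∑ i, (if z i then w i * (β1 * x i + (e i).2)
                   else -(w i * (β0 * x i + (e i).1))))
    -- conditional variance over noise and accepted assignment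
    (VarC : Finset (Fin n → Bool) → ℝ)
    (hVarC : ∀ T' : Finset (Fin n → Bool), VarC T' =
      ∫ e, (∑ z ∈ T',
        (τ e z - ∫ e', (∑ z' ∈ T', τ e' z') / T'.card ∂μE) ^ 2) / T'.card ∂μE) :
    VarC Ta ≤ VarC Tρ := by
  classical
  obtain ⟨hα0, hα1⟩ := hα
  -- abbreviations
  set bb : ℝ := (β1 + β0) / 2 with hbb
  set K : ℝ := (2 / (n : ℝ)) * ∑ i, ((β1 - β0) / 2 * (w i * x i)) with hK
  -- decomposition of the estimator
  have hτ' : ∀ e z, τ e z = (bb * V z + K)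
      + (2 / (n : ℝ)) * ∑ i, w i * (if z i then (e i).2 else -(e i).1) := by
    intro e z
    have expand : ∀ i, (if z i then w i * (β1 * x i + (e i).2)
          else -(w i * (β0 * x i + (e i).1)))
        = (β1 + β0) / 2 * (w i * x i * sgn z i) + (β1 - β0) / 2 * (w i * x i)
          + w i * (if z i then (e i).2 else -(e i).1) := by
      intro i; rw [hsgn]; by_cases h : z i <;> simp [h] <;> ring
    rw [hτ e z, hV z, hK, hbb]
    rw [Finset.sum_congr rfl fun i _ => expand i]
    simp only [Finset.sum_add_distrib, ← Finset.mul_sum]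
    ring
  -- negation symmetry facts
  have hVneg : ∀ z, V (fun i => !(z i)) = - V z := by
    intro z
    rw [hV, hV]
    have hterm : ∀ i : Fin n, w i * x i * sgn (fun i => !(z i)) i
        = -(w i * x i * sgn z i) := by
      intro i; rw [hsgn, hsgn]; by_cases h : z i <;> simp [h]
    rw [Finset.sum_congr rfl fun i _ => hterm i, Finset.sum_neg_distrib]
    ring
  have hSneg : ∀ z ∈ S, (fun i => !(z i)) ∈ S := by
    intro z hz
    rw [hS, Finset.mem_filter] at hz ⊢
    refine ⟨Finset.mem_univ _, ?_⟩
    have hcompl : (Finset.univ.filter fun i : Fin n => (!(z i)) = true)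
        = (Finset.univ.filter fun i : Fin n => z i = true)ᶜ := by
      ext i; simp
    show (Finset.univ.filter fun i : Fin n => (!(z i)) = true).card = n / 2
    rw [hcompl, Finset.card_compl]
    have hz2 : (Finset.univ.filter fun i : Fin n => z i = true).card = n / 2 := hz.2
    rw [hz2, Fintype.card_fin]
    obtain ⟨m, hm⟩ := heven
    subst hm
    omega
  have hnegneg : ∀ z : Fin n → Bool, (fun i => !(!(z i))) = z := by
    intro z; funext i; simp
  have hnegne : ∀ z : Fin n → Bool, (fun i => !(z i)) ≠ z := by
    intro z h
    have := congrFun h ⟨0, hn⟩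
    simp at this
  have hTaneg : ∀ z ∈ Ta, (fun i => !(z i)) ∈ Ta := by
    intro z hz
    obtain ⟨hzS, hzB⟩ := (hTa z).1 hz
    refine (hTa _).2 ⟨hSneg z hzS, ?_⟩
    rw [hB, hVneg]
    have hsq : ((- V z) / Real.sqrt VarV) ^ 2 = (V z / Real.sqrt VarV) ^ 2 := by ring
    rw [hsq, ← hB z]
    exact hzB
  have hTρneg : ∀ z ∈ Tρ, (fun i => !(z i)) ∈ Tρ := by
    intro z hz
    rw [hTρ, Finset.mem_filter] at hz ⊢
    exact ⟨hSneg z hz.1, by rw [← hsym z]; exact hz.2⟩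
  have hsum0 : ∀ T : Finset (Fin n → Bool), (∀ z ∈ T, (fun i => !(z i)) ∈ T) →
      (∑ z ∈ T, V z) = 0 := by
    intro T hclose
    exact Finset.sum_involution (fun z _ => fun i => !(z i))
      (fun z hz => by rw [hVneg]; ring)
      (fun z hz _ => hnegne z) (fun z hz => hclose z hz) (fun z hz => hnegneg z)
  -- variance formulas
  have hVa := varc_formula n μ0 hi1 hi2 hi3 hi4 hmean0 hmean1 σ hvar0 hvar1
    w (2 / (n : ℝ)) K bb V τ hτ' Ta hTane (hsum0 Ta hTaneg)
  have hVρ := varc_formula n μ0 hi1 hi2 hi3 hi4 hmean0 hmean1 σ hvar0 hvar1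
    w (2 / (n : ℝ)) K bb V τ hτ' Tρ hTρne (hsum0 Tρ hTρneg)
  -- combinatorial comparison
  have hsqrt : Real.sqrt VarV ^ 2 = VarV := Real.sq_sqrt hVarVpos.le
  have hAmaj : ∀ z ∈ Ta, V z ^ 2 < a * VarV := by
    intro z hz
    have h1 := ((hTa z).1 hz).2
    rw [hB, div_pow, hsqrt] at h1
    exact (div_lt_iff₀ hVarVpos).1 h1
  have hTmaj : ∀ z ∈ Tρ, z ∉ Ta → a * VarV ≤ V z ^ 2 := by
    intro z hz hza
    have hzS : z ∈ S := by rw [hTρ] at hz; exact (Finset.mem_filter.1 hz).1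
    have h1 : ¬ (B z ^ 2 < a) := fun h => hza ((hTa z).2 ⟨hzS, h⟩)
    push_neg at h1
    rw [hB, div_pow, hsqrt] at h1
    exact (le_div_iff₀ hVarVpos).1 h1
  have hTasub : Ta ⊆ S := fun z hz => ((hTa z).1 hz).1
  have hScard : (0 : ℝ) < S.card := by
    have hSne : S.Nonempty := ⟨hTane.choose, hTasub hTane.choose_spec⟩
    exact_mod_cast Finset.card_pos.2 hSne
  have hcardle : Ta.card ≤ Tρ.card := by
    have h := hTρfrac
    rw [← hTafrac] at h
    rw [div_le_div_iff₀ hScard hScard] at h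
    exact_mod_cast le_of_mul_le_mul_right h hScard
  have hcomb : (∑ z ∈ Ta, V z ^ 2) / Ta.card ≤ (∑ z ∈ Tρ, V z ^ 2) / Tρ.card :=
    trunc_opt Ta Tρ (fun z => V z ^ 2) (fun z => sq_nonneg _) (a * VarV)
      hAmaj hTmaj hTane hTρne hcardle
  -- conclude
  rw [hVarC Ta, hVarC Tρ, hμE, hVa, hVρ]
  exact add_le_add_left (mul_le_mul_of_nonneg_left hcomb (sq_nonneg bb)) _
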